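/- Let J_N be the N×N nilpotent matrix with (J_N)_{i,j} = 1 if j = i+1 and 0 otherwise, and let m_1,…,m_{2k} and n_1,…,n_{2k} be non-negative integers bounded by a fixed constant. If Σ_i m_i ≠ Σ_i n_i then tr[ J_N^{m_1} (J_N*)^{n_1} ⋯ J_N^{m_{2k}} (J_N*)^{n_{2k}} ] = 0 for every N; if Σ_i m_i = Σ_i n_i then (1/N) tr[ J_N^{m_1} (J_N*)^{n_1} ⋯ J_N^{m_{2k}} (J_N*)^{n_{2k}} ] → 1 as N → ∞. -/

import Mathlib

open Filter Finset Matrix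

noncomputable section

def Jmat (N : ℕ) : Matrix (Fin N) (Fin N) ℂ :=
  Matrix.of fun i j => if (j : ℕ) = (i : ℕ) + 1 then 1 else 0

/-- Partial shift matrix with cutoff. -/
def Amat (N : ℕ) (a : ℕ × ℕ) : Matrix (Fin N) (Fin N) ℂ :=
  Matrix.of fun p q => if (p : ℕ) + a.1 = (q : ℕ) + a.2 ∧ (p : ℕ) + a.1 < N then 1 else 0

def Phi (N : ℕ) : List (ℕ × ℕ) → ℕ → ℕ → Bool
  | [], p, q => p = q
  | a :: L, p, q => (decide (a.2 ≤ p + a.1) && decide (p + a.1 < N)) && Phi N L (p + a.1 - a.2) q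

lemma Jpow (N mm : ℕ) :
    Jmat N ^ mm = Matrix.of fun i j : Fin N => if (j : ℕ) = (i : ℕ) + mm then 1 else 0 := by
  induction mm with
  | zero =>
    ext i j
    simp only [pow_zero, Matrix.one_apply, Matrix.of_apply, Nat.add_zero]
    by_cases h : i = j <;> simp [h, Fin.val_eq_val, eq_comm]
  | succ mm ih =>
    ext i j
    rw [pow_succ, ih]
    simp only [Matrix.mul_apply, Matrix.of_apply, Jmat]
    by_cases h : (j : ℕ) = (i : ℕ) + (mm + 1)
    · have hlt : (i : ℕ) + mm < N := by omega
      rw [Finset.sum_eq_single (⟨(i : ℕ) + mm, hlt⟩ : Fin N)]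
      · have h' : (j : ℕ) = ((i : ℕ) + mm) + 1 := by omega
        simp [h, h']
        omega
      · intro l _ hl
        have : (l : ℕ) ≠ (i : ℕ) + mm := by
          intro hc; apply hl; exact Fin.ext hc
        simp [this]
      · simp
    · rw [if_neg h]
      apply Finset.sum_eq_zero
      intro l _
      by_cases hl : (l : ℕ) = (i : ℕ) + mm
      · have : (j : ℕ) ≠ (l : ℕ) + 1 := by omega
        simp [this]
      · simp [hl]

lemma Amat_eq (N : ℕ) (a : ℕ × ℕ) :
    Jmat N ^ a.1 * ((Jmat N)ᴴ) ^ a.2 = Amat N a := by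
  ext i j
  rw [← conjTranspose_pow, Jpow, Jpow]
  simp only [Matrix.mul_apply, Matrix.conjTranspose_apply, Matrix.of_apply, Amat]
  by_cases h : (i : ℕ) + a.1 = (j : ℕ) + a.2 ∧ (i : ℕ) + a.1 < N
  · obtain ⟨h1, h2⟩ := h
    rw [Finset.sum_eq_single (⟨(i : ℕ) + a.1, h2⟩ : Fin N)]
    · have hc : (i : ℕ) + a.1 = (j : ℕ) + a.2 ∧ (i : ℕ) + a.1 < N := ⟨h1, h2⟩
      simp only [Fin.val_mk, if_pos h1, if_pos hc, eq_self_iff_true, if_true, star_one, one_mul]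
    · intro l _ hl
      have : (l : ℕ) ≠ (i : ℕ) + a.1 := fun hc => hl (Fin.ext hc)
      simp [this]
    · simp
  · simp only [not_and_or] at h
    rw [if_neg (by tauto), Finset.sum_eq_zero]
    intro l _
    by_cases hl : (l : ℕ) = (i : ℕ) + a.1
    · rcases h with h | h
      · have : (l : ℕ) ≠ (j : ℕ) + a.2 := by omega
        simp [this]
      · exact absurd (hl ▸ l.isLt) h
    · simp [hl]

lemma prod_Amat (N : ℕ) (L : List (ℕ × ℕ)) (p q : Fin N) :
    ((L.map (Amat N)).prod) p q = if Phi N L (p : ℕ) (q : ℕ) then 1 else 0 := by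
  induction L generalizing p with
  | nil =>
    simp only [List.map_nil, List.prod_nil, Phi]
    by_cases h : p = q <;> simp [Matrix.one_apply, h, Fin.val_eq_val]
  | cons a L ih =>
    simp only [List.map_cons, List.prod_cons, Matrix.mul_apply, Amat, Matrix.of_apply, ih, Phi]
    by_cases h : a.2 ≤ (p : ℕ) + a.1 ∧ (p : ℕ) + a.1 < N
    · obtain ⟨h1, h2⟩ := h
      have hr : (p : ℕ) + a.1 - a.2 < N := by omega
      rw [Finset.sum_eq_single (⟨(p : ℕ) + a.1 - a.2, hr⟩ : Fin N)]
      · have hc : (p : ℕ) + a.1 = (((p : ℕ) + a.1 - a.2) : ℕ) + a.2 ∧ (p : ℕ) + a.1 < N :=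
          ⟨by omega, h2⟩
        simp only [Fin.val_mk, if_pos hc, one_mul]
        simp [h1, h2]
      · intro r _ hrr
        have : (p : ℕ) + a.1 ≠ (r : ℕ) + a.2 := by
          intro hc
          apply hrr; apply Fin.ext; simp only; omega
        simp [this]
      · simp
    · rw [Finset.sum_eq_zero, eq_comm]
      · simp only [not_and_or, not_le, not_lt] at h
        have : ¬ ((a.2 ≤ (p : ℕ) + a.1 ∧ (p : ℕ) + a.1 < N)) := by
          simp only [not_and_or, not_le, not_lt]; tauto
        simp only [Bool.and_eq_true, decide_eq_true_eq]
        rw [if_neg]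
        intro ⟨⟨hx, hy⟩, _⟩
        exact this ⟨hx, hy⟩
      · intro r _
        have : ¬((p : ℕ) + a.1 = (r : ℕ) + a.2 ∧ (p : ℕ) + a.1 < N) := by
          simp only [not_and_or, not_le, not_lt] at h ⊢
          rcases h with h | h
          · left; omega
          · right; omega
        simp [this]

lemma Phi_sum (N : ℕ) : ∀ (L : List (ℕ × ℕ)) (p q : ℕ), Phi N L p q = true →
    p + (L.map Prod.fst).sum = q + (L.map Prod.snd).sum := by
  intro L
  induction L with
  | nil => intro p q h; simp [Phi] at h; simp [h]
  | cons a L ih =>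
    intro p q h
    simp only [Phi, Bool.and_eq_true, decide_eq_true_eq] at h
    obtain ⟨⟨h1, h2⟩, h3⟩ := h
    have := ih _ _ h3
    simp only [List.map_cons, List.sum_cons]
    omega

lemma Phi_of (N : ℕ) : ∀ (L : List (ℕ × ℕ)) (p q : ℕ),
    q + (L.map Prod.snd).sum = p + (L.map Prod.fst).sum →
    (L.map Prod.snd).sum ≤ p → p + (L.map Prod.fst).sum < N →
    Phi N L p q = true := by
  intro L
  induction L with
  | nil => intro p q h _ _; simp at h; simp [Phi, h]
  | cons a L ih =>
    intro p q h h1 h2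
    simp only [List.map_cons, List.sum_cons] at h h1 h2
    simp only [Phi, Bool.and_eq_true, decide_eq_true_eq]
    refine ⟨⟨by omega, by omega⟩, ih _ _ (by omega) (by omega) (by omega)⟩

lemma trace_prod (N : ℕ) (L : List (ℕ × ℕ)) :
    ((L.map (Amat N)).prod).trace
      = ((Finset.univ.filter (fun p : Fin N => Phi N L (p : ℕ) (p : ℕ) = true)).card : ℂ) := by
  unfold Matrix.trace
  simp only [Matrix.diag_apply, prod_Amat]
  rw [← Finset.sum_boole]

theorem trace_shift_word
    (k B : ℕ) (m n : Fin (2 * k) → ℕ)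
    (hm : ∀ i, m i ≤ B) (hn : ∀ i, n i ≤ B) :
    ((∑ i, m i) ≠ (∑ i, n i) →
      ∀ N : ℕ,
        ((List.ofFn (fun i : Fin (2 * k) => Jmat N ^ m i * ((Jmat N)ᴴ) ^ n i)).prod).trace
          = 0) ∧
    ((∑ i, m i) = (∑ i, n i) →
      Tendsto
        (fun N : ℕ => (N : ℂ)⁻¹ *
          ((List.ofFn (fun i : Fin (2 * k) => Jmat N ^ m i * ((Jmat N)ᴴ) ^ n i)).prod).trace)
        atTop (nhds 1)) := by
  set L : List (ℕ × ℕ) := List.ofFn (fun i : Fin (2 * k) => (m i, n i)) with hL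
  have hmap : ∀ N : ℕ, List.ofFn (fun i : Fin (2 * k) => Jmat N ^ m i * ((Jmat N)ᴴ) ^ n i)
      = L.map (Amat N) := by
    intro N
    rw [hL, List.map_ofFn]
    congr 1
    funext i
    simp only [Function.comp_apply]
    simpa using Amat_eq N (m i, n i)
  have hfst : (L.map Prod.fst).sum = ∑ i, m i := by
    rw [hL, List.map_ofFn, List.sum_ofFn]
    rfl
  have hsnd : (L.map Prod.snd).sum = ∑ i, n i := by
    rw [hL, List.map_ofFn, List.sum_ofFn]
    rfl
  set c : ℕ → ℕ :=
    fun N => (Finset.univ.filter (fun p : Fin N => Phi N L (p : ℕ) (p : ℕ) = true)).card with hc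
  constructor
  · intro hne N
    rw [hmap N, trace_prod]
    have : (Finset.univ.filter (fun p : Fin N => Phi N L (p : ℕ) (p : ℕ) = true)) = ∅ := by
      rw [Finset.filter_eq_empty_iff]
      intro p _ hp
      have := Phi_sum N L p p hp
      rw [hfst, hsnd] at this
      omega
    rw [this]
    simp
  · intro heq
    set S := ∑ i, m i with hS
    have hub : ∀ N : ℕ, c N ≤ N := by
      intro N
      calc c N ≤ Finset.univ.card := Finset.card_filter_le _ _
      _ = N := by simp
    have hlb : ∀ N : ℕ, N - 2 * S ≤ c N := by
      intro N
      rcases Nat.lt_or_ge N (2 * S + 1) with hN | hN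
      · have h0 : N - 2 * S = 0 := by omega
        rw [h0]; exact Nat.zero_le _
      · have hcard : (Finset.Ico S (N - S)).card ≤ c N := by
          apply Finset.card_le_card_of_injOn
            (fun x => (⟨x % N, Nat.mod_lt _ (by omega)⟩ : Fin N))
          · intro x hx
            simp only [Finset.mem_coe, Finset.mem_Ico] at hx
            have hxN : x % N = x := Nat.mod_eq_of_lt (by omega)
            simp only [Finset.mem_coe, Finset.mem_filter, Finset.mem_univ, true_and, Fin.val_mk, hxN]
            apply Phi_of
            · rw [hfst, hsnd, ← heq]
            · rw [hsnd, ← heq]; omega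
            · rw [hfst]; omega
          · intro x hx y hy hxy
            simp only [Finset.mem_coe, Finset.mem_Ico] at hx hy
            have hv : x % N = y % N := congrArg Fin.val hxy
            rwa [Nat.mod_eq_of_lt (by omega), Nat.mod_eq_of_lt (by omega)] at hv
        rw [Nat.card_Ico] at hcard
        omega
    have hreal : Tendsto (fun N : ℕ => (c N : ℝ) / N) atTop (nhds 1) := by
      have h0 : Tendsto (fun N : ℕ => 1 - (2 * S : ℝ) / N) atTop (nhds 1) := by
        have hd := tendsto_const_div_atTop_nhds_zero_nat (2 * S : ℝ)
        have hsub : Tendsto (fun N : ℕ => 1 - (2 * S : ℝ) / N) atTop (nhds (1 - 0)) :=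
          Tendsto.sub tendsto_const_nhds hd
        simpa using hsub
      refine tendsto_of_tendsto_of_tendsto_of_le_of_le' h0 tendsto_const_nhds ?_ ?_
      · filter_upwards [eventually_ge_atTop 1] with N hN
        have hNpos : (0 : ℝ) < N := by positivity
        have hcN : (N : ℝ) - 2 * S ≤ (c N : ℝ) := by
          have h1 : ((N - 2 * S : ℕ) : ℝ) ≤ (c N : ℝ) := Nat.cast_le.mpr (hlb N)
          have h2 : (N : ℝ) - 2 * S ≤ ((N - 2 * S : ℕ) : ℝ) := by
            rcases le_or_gt (2 * S) N with h | h
            · rw [Nat.cast_sub h]; push_cast; linarith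
            · have hz : ((N - 2 * S : ℕ) : ℝ) = 0 := by
                rw [Nat.sub_eq_zero_of_le (by omega)]; simp
              have hNS : (N : ℝ) ≤ 2 * (S : ℝ) := by exact_mod_cast h.le
              rw [hz]; linarith
          linarith
        have hEq : 1 - (2 * S : ℝ) / N = ((N : ℝ) - 2 * S) / N := by field_simp
        rw [hEq]
        gcongr
      · filter_upwards with N
        rcases Nat.eq_zero_or_pos N with h | h
        · simp [h]
        · rw [div_le_one (by positivity)]
          exact_mod_cast hub N
    have hcplx : Tendsto (fun N : ℕ => (((c N : ℝ) / N : ℝ) : ℂ)) atTop (nhds ((1 : ℝ) : ℂ)) :=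
      (Complex.continuous_ofReal.tendsto _).comp hreal
    simp only [Complex.ofReal_one] at hcplx
    apply hcplx.congr
    intro N
    rw [hmap N, trace_prod]
    push_cast
    rw [div_eq_mul_inv]
    ring
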